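/- For every real δ > 0, the integral β = ∫₀^δ ϖ_l(z)² dz, where ϖ_l(z) = (∫_{{ξ∈ℝ³ : ‖ξ‖≤δ, ξ₃≥z}} ‖ξ‖² dξ)/(∫_{{ξ∈ℝ³ : ‖ξ‖≤δ}} ‖ξ‖² dξ), equals 125δ/1848. -/

import Mathlib

open MeasureTheory Real


lemma gamma52 : Real.Gamma (5/2) = 3/4 * Real.sqrt π := by
  have h1 : (5/2:ℝ) = 3/2 + 1 := by norm_num
  have h2 : (3/2:ℝ) = 1/2 + 1 := by norm_num
  rw [h1, Real.Gamma_add_one (by norm_num), h2, Real.Gamma_add_one (by norm_num),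
    Real.Gamma_one_half_eq]
  ring

lemma vol2 : (volume (Metric.ball (0 : EuclideanSpace ℝ (Fin 2)) 1)).toReal = π := by
  rw [EuclideanSpace.volume_ball]
  norm_num
  exact Real.sq_sqrt Real.pi_nonneg

lemma vol3 : (volume (Metric.ball (0 : EuclideanSpace ℝ (Fin 3)) 1)).toReal = 4/3*π := by
  rw [EuclideanSpace.volume_ball]
  norm_num [gamma52]
  rw [ENNReal.toReal_ofReal (by positivity)]
  rw [show Real.sqrt π ^ 3 = π * Real.sqrt π by
    rw [pow_succ, Real.sq_sqrt Real.pi_nonneg]]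
  rw [div_eq_iff (by positivity)]
  ring



lemma ballInt (δ : ℝ) (hδ : 0 < δ) :
    ∫ ξ in {ξ : EuclideanSpace ℝ (Fin 3) | ‖ξ‖ ≤ δ}, ‖ξ‖^2 = 4/5*π*δ^5 := by
  have hs : {ξ : EuclideanSpace ℝ (Fin 3) | ‖ξ‖ ≤ δ} = Metric.closedBall 0 δ := by
    ext ξ; simp [Metric.mem_closedBall, dist_zero_right]
  rw [hs, ← integral_indicator measurableSet_closedBall]
  have key : ∀ ξ : EuclideanSpace ℝ (Fin 3),
      (Metric.closedBall (0:EuclideanSpace ℝ (Fin 3)) δ).indicator (fun ξ => ‖ξ‖^2) ξ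
      = (Set.Iic δ).indicator (fun r : ℝ => r^2) ‖ξ‖ := by
    intro ξ
    by_cases h : ‖ξ‖ ≤ δ <;>
      simp [Set.indicator, Metric.mem_closedBall, dist_zero_right, h]
  simp_rw [key]
  rw [MeasureTheory.integral_fun_norm_addHaar volume ((Set.Iic δ).indicator (fun r : ℝ => r^2))]
  have hd : Module.finrank ℝ (EuclideanSpace ℝ (Fin 3)) = 3 := by
    simp [finrank_euclideanSpace]
  rw [hd, measureReal_def, vol3]
  have key2 : ∀ y : ℝ, y ^ (3-1) • (Set.Iic δ).indicator (fun r : ℝ => r^2) y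
      = (Set.Iic δ).indicator (fun r : ℝ => r^4) y := by
    intro y
    by_cases h : y ≤ δ <;> simp [Set.indicator, h] <;> ring
  simp_rw [key2]
  rw [integral_indicator measurableSet_Iic, Measure.restrict_restrict measurableSet_Iic,
    show Set.Iic δ ∩ Set.Ioi 0 = Set.Ioc 0 δ by rw [Set.inter_comm, Set.Ioi_inter_Iic],
    ← intervalIntegral.integral_of_le hδ.le, integral_pow]
  push_cast
  rw [smul_eq_mul]
  ring



lemma diskInt (R2 t : ℝ) :
    (∫ y : Fin 2 → ℝ, Set.indicator {y : Fin 2 → ℝ | ∑ j, (y j)^2 ≤ R2}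
      (fun y => t^2 + ∑ j, (y j)^2) y)
      = if 0 ≤ R2 then π * (t^2*R2 + R2^2/2) else 0 := by
  have hMP := (EuclideanSpace.volume_preserving_symm_measurableEquiv_toLp (Fin 2))
  rw [← hMP.integral_comp']
  have key : ∀ w : EuclideanSpace ℝ (Fin 2),
      Set.indicator {y : Fin 2 → ℝ | ∑ j, (y j)^2 ≤ R2}
        (fun y => t^2 + ∑ j, (y j)^2) ((MeasurableEquiv.toLp 2 (Fin 2 → ℝ)).symm w)
      = (fun r : ℝ => if r^2 ≤ R2 then t^2 + r^2 else 0) ‖w‖ := by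
    intro w
    have hw : ∀ j, ((MeasurableEquiv.toLp 2 (Fin 2 → ℝ)).symm w) j = w j := fun j => rfl
    have hnorm : ∑ j, (w j)^2 = ‖w‖^2 := by
      rw [EuclideanSpace.norm_eq, Real.sq_sqrt (by positivity)]
      simp [sq_abs]
    simp only [Set.indicator, Set.mem_setOf_eq, hw, hnorm]
  simp_rw [key]
  rw [MeasureTheory.integral_fun_norm_addHaar volume (fun r : ℝ => if r^2 ≤ R2 then t^2 + r^2 else 0)]
  have hd : Module.finrank ℝ (EuclideanSpace ℝ (Fin 2)) = 2 := by
    simp [finrank_euclideanSpace]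
  rw [hd, measureReal_def, vol2]
  by_cases hR : 0 ≤ R2
  · rw [if_pos hR]
    have key2 : ∀ y ∈ Set.Ioi (0:ℝ), y ^ (2-1) • (if y^2 ≤ R2 then t^2 + y^2 else 0)
        = Set.indicator (Set.Iic (Real.sqrt R2)) (fun y => t^2*y + y^3) y := by
      intro y hy
      have hy' : (0:ℝ) < y := hy
      have hiff : y^2 ≤ R2 ↔ y ≤ Real.sqrt R2 := by
        constructor
        · intro h
          rw [← Real.sqrt_sq hy'.le]
          exact Real.sqrt_le_sqrt h
        · intro h
          nlinarith [Real.sq_sqrt hR, Real.sqrt_nonneg R2]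
      simp only [Set.indicator, Set.mem_Iic, ← hiff]
      by_cases h : y^2 ≤ R2 <;> simp [h] <;> ring
    rw [setIntegral_congr_fun measurableSet_Ioi key2]
    rw [integral_indicator measurableSet_Iic, Measure.restrict_restrict measurableSet_Iic,
      show Set.Iic (Real.sqrt R2) ∩ Set.Ioi 0 = Set.Ioc 0 (Real.sqrt R2) by
        rw [Set.inter_comm, Set.Ioi_inter_Iic],
      ← intervalIntegral.integral_of_le (Real.sqrt_nonneg R2)]
    have : (∫ y in (0:ℝ)..(Real.sqrt R2), (t^2*y + y^3))
        = t^2 * R2/2 + R2^2/4 := by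
      rw [intervalIntegral.integral_add
        ((by fun_prop : Continuous fun y:ℝ => t^2*y).intervalIntegrable _ _)
        ((by fun_prop : Continuous fun y:ℝ => y^3).intervalIntegrable _ _)]
      rw [intervalIntegral.integral_const_mul, integral_id, integral_pow]
      have h2 : Real.sqrt R2 ^ 2 = R2 := Real.sq_sqrt hR
      have h4 : Real.sqrt R2 ^ 4 = R2^2 := by
        rw [show (4:ℕ) = 2*2 by norm_num, pow_mul, h2]
      rw [h2] at *
      push_cast
      nlinarith [h4]
    rw [this, nsmul_eq_mul, smul_eq_mul]
    ring
  · rw [if_neg hR]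
    have key2 : ∀ y ∈ Set.Ioi (0:ℝ), y ^ (2-1) • (if y^2 ≤ R2 then t^2 + y^2 else 0) = (0:ℝ) := by
      intro y hy
      rw [if_neg (by nlinarith [Set.mem_Ioi.mp hy]), smul_zero]
    rw [setIntegral_congr_fun measurableSet_Ioi key2]
    simp



lemma capInt (δ z : ℝ) (hδ : 0 < δ) (hz : 0 ≤ z) (hzδ : z ≤ δ) :
    ∫ ξ in {ξ : EuclideanSpace ℝ (Fin 3) | ‖ξ‖ ≤ δ ∧ z ≤ ξ 2}, ‖ξ‖^2
      = π/2 * (4/5*δ^5 - δ^4*z + z^5/5) := by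
  -- Step 1: transfer to (Fin 3 → ℝ)
  set e := (MeasurableEquiv.toLp 2 (Fin 3 → ℝ)).symm with he
  have hMP : MeasurePreserving e.symm volume volume :=
    (EuclideanSpace.volume_preserving_symm_measurableEquiv_toLp (Fin 3)).symm
  rw [← hMP.setIntegral_preimage_emb e.symm.measurableEmbedding]
  have hsymm : ∀ x : Fin 3 → ℝ, ∀ j, (e.symm x) j = x j := fun x j => rfl
  have hnorm : ∀ x : Fin 3 → ℝ, ‖e.symm x‖^2 = ∑ j, (x j)^2 := by
    intro x
    rw [EuclideanSpace.norm_eq, Real.sq_sqrt (by positivity)]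
    simp [hsymm, sq_abs]
  have hset : e.symm ⁻¹' {ξ : EuclideanSpace ℝ (Fin 3) | ‖ξ‖ ≤ δ ∧ z ≤ ξ 2}
      = {x : Fin 3 → ℝ | ∑ j, (x j)^2 ≤ δ^2 ∧ z ≤ x 2} := by
    ext x
    simp only [Set.mem_preimage, Set.mem_setOf_eq, hsymm]
    constructor
    · rintro ⟨h1, h2⟩
      exact ⟨by rw [← hnorm]; exact pow_le_pow_left₀ (norm_nonneg _) h1 2, h2⟩
    · rintro ⟨h1, h2⟩
      refine ⟨?_, h2⟩
      have := hnorm x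
      nlinarith [norm_nonneg (e.symm x)]
  rw [hset]
  have hfun : ∀ x : Fin 3 → ℝ, ‖e.symm x‖^2 = ∑ j, (x j)^2 := hnorm
  rw [show (fun x : Fin 3 → ℝ => ‖e.symm x‖^2) = fun x => ∑ j, (x j)^2 from funext hnorm]
  -- Step 2: split off coordinate 2
  set φ := MeasurableEquiv.piFinSuccAbove (fun _ : Fin 3 => ℝ) 2 with hφdef
  have hφ : MeasurePreserving φ.symm volume volume :=
    (volume_preserving_piFinSuccAbove (fun _ : Fin 3 => ℝ) 2).symm
  rw [← hφ.setIntegral_preimage_emb φ.symm.measurableEmbedding]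
  have hins : ∀ p : ℝ × (Fin 2 → ℝ),
      (∑ j, (φ.symm p j)^2) = p.1^2 + ∑ j, (p.2 j)^2 := by
    rintro ⟨t, y⟩
    rw [Fin.sum_univ_succAbove (fun j => (φ.symm (t, y) j)^2) 2]
    simp [hφdef]
  have hset2 : φ.symm ⁻¹' {x : Fin 3 → ℝ | ∑ j, (x j)^2 ≤ δ^2 ∧ z ≤ x 2}
      = {p : ℝ × (Fin 2 → ℝ) | p.1^2 + ∑ j, (p.2 j)^2 ≤ δ^2 ∧ z ≤ p.1} := by
    ext ⟨t, y⟩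
    simp only [Set.mem_preimage, Set.mem_setOf_eq, hins ⟨t, y⟩]
    have : φ.symm (t, y) 2 = t := by simp [hφdef]
    rw [this]
  rw [hset2]
  rw [show (fun p : ℝ × (Fin 2 → ℝ) => ∑ j, (φ.symm p j)^2)
      = fun p : ℝ × (Fin 2 → ℝ) => p.1^2 + ∑ j, (p.2 j)^2 from funext hins]
  -- Step 3: Fubini
  set U := {p : ℝ × (Fin 2 → ℝ) | p.1^2 + ∑ j, (p.2 j)^2 ≤ δ^2 ∧ z ≤ p.1} with hUdef
  set g : ℝ × (Fin 2 → ℝ) → ℝ := fun p => p.1^2 + ∑ j, (p.2 j)^2 with hgdef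
  have hgcont : Continuous g := by
    apply Continuous.add (by fun_prop)
    exact continuous_finset_sum _ (fun j _ => by fun_prop)
  have hU : MeasurableSet U := by
    apply MeasurableSet.inter
    · exact (isClosed_le hgcont continuous_const).measurableSet
    · exact (isClosed_le continuous_const continuous_fst).measurableSet
  have hUclosed : IsClosed U := by
    apply IsClosed.inter
    · exact isClosed_le hgcont continuous_const
    · exact isClosed_le continuous_const continuous_fst
  have hUsub : U ⊆ Metric.closedBall 0 δ := by
    rintro ⟨t, y⟩ ⟨h1, h2⟩
    have hsum : ∀ j, (y j)^2 ≤ δ^2 := by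
      intro j
      have : (y j)^2 ≤ ∑ j, (y j)^2 :=
        Finset.single_le_sum (fun i _ => sq_nonneg (y i)) (Finset.mem_univ j)
      nlinarith [sq_nonneg t]
    have ht2 : t^2 ≤ δ^2 := by
      have : (0:ℝ) ≤ ∑ j, (y j)^2 := Finset.sum_nonneg (fun i _ => sq_nonneg (y i))
      nlinarith
    rw [Metric.mem_closedBall, dist_zero_right, Prod.norm_def]
    apply max_le
    · rw [Real.norm_eq_abs, abs_le]
      constructor <;> nlinarith
    · rw [pi_norm_le_iff_of_nonneg hδ.le]
      intro j
      rw [Real.norm_eq_abs, abs_le]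
      constructor <;> nlinarith [hsum j]
  have hUcompact : IsCompact U :=
    (Metric.isCompact_of_isClosed_isBounded hUclosed
      (Metric.isBounded_closedBall.subset hUsub))
  have hInt : IntegrableOn g U volume := hgcont.continuousOn.integrableOn_compact hUcompact
  rw [← integral_indicator hU]
  rw [Measure.volume_eq_prod]
  have hFInt : Integrable (U.indicator g) ((volume : Measure ℝ).prod volume) := by
    rw [← Measure.volume_eq_prod, integrable_indicator_iff hU]
    exact hInt
  rw [integral_prod _ hFInt]
  -- inner integral
  have hinner : ∀ t : ℝ, (∫ y : Fin 2 → ℝ, U.indicator g (t, y))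
      = Set.indicator (Set.Icc z δ) (fun t => π/2*δ^4 - π/2*t^4) t := by
    intro t
    by_cases hzt : z ≤ t
    · have heq : ∀ y : Fin 2 → ℝ, U.indicator g (t, y)
          = Set.indicator {y : Fin 2 → ℝ | ∑ j, (y j)^2 ≤ δ^2 - t^2}
            (fun y => t^2 + ∑ j, (y j)^2) y := by
        intro y
        simp only [Set.indicator, hUdef, hgdef, Set.mem_setOf_eq, hzt, and_true]
        by_cases h : ∑ j, (y j)^2 ≤ δ^2 - t^2
        · rw [if_pos (by linarith), if_pos h]
        · rw [if_neg (by intro hc; exact h (by linarith)), if_neg h]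
      simp_rw [heq]
      rw [diskInt (δ^2 - t^2) t]
      by_cases ht : t ≤ δ
      · rw [if_pos (by nlinarith), Set.indicator_of_mem (Set.mem_Icc.mpr ⟨hzt, ht⟩)]
        ring
      · rw [if_neg (by push_neg at ht; nlinarith),
          Set.indicator_of_notMem (by simp [Set.mem_Icc]; intro _; linarith)]
    · have heq : ∀ y : Fin 2 → ℝ, U.indicator g (t, y) = 0 := by
        intro y
        apply Set.indicator_of_notMem
        simp only [hUdef, Set.mem_setOf_eq, not_and]
        intro _; exact hzt
      simp_rw [heq]
      rw [Set.indicator_of_notMem (by simp [Set.mem_Icc]; intro h; exact absurd h hzt)]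
      simp
  simp_rw [hinner]
  rw [integral_indicator measurableSet_Icc, integral_Icc_eq_integral_Ioc,
    ← intervalIntegral.integral_of_le hzδ]
  rw [intervalIntegral.integral_sub intervalIntegrable_const
    ((by fun_prop : Continuous fun t:ℝ => π/2*t^4).intervalIntegrable _ _)]
  rw [intervalIntegral.integral_const, intervalIntegral.integral_const_mul, integral_pow]
  push_cast
  rw [smul_eq_mul]
  ring




lemma polyInt (δ : ℝ) : (∫ z in (0:ℝ)..δ,
    (16*δ^10 - 40*δ^9*z + 25*δ^8*z^2 + 8*δ^5*z^5 - 10*δ^4*z^6 + z^10))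
    = 1000/231 * δ^11 := by
  have c : ∀ f : ℝ → ℝ, Continuous f → IntervalIntegrable f volume 0 δ :=
    fun f hf => hf.intervalIntegrable _ _
  rw [intervalIntegral.integral_add (c _ (by fun_prop)) (c _ (by fun_prop)),
    intervalIntegral.integral_sub (c _ (by fun_prop)) (c _ (by fun_prop)),
    intervalIntegral.integral_add (c _ (by fun_prop)) (c _ (by fun_prop)),
    intervalIntegral.integral_add (c _ (by fun_prop)) (c _ (by fun_prop)),
    intervalIntegral.integral_sub (c _ (by fun_prop)) (c _ (by fun_prop)),
    intervalIntegral.integral_const, intervalIntegral.integral_const_mul,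
    intervalIntegral.integral_const_mul, intervalIntegral.integral_const_mul,
    intervalIntegral.integral_const_mul, integral_id, integral_pow, integral_pow,
    integral_pow, integral_pow]
  push_cast
  rw [smul_eq_mul]
  ring

theorem beta_3d (δ : ℝ) (hδ : 0 < δ) :
    (∫ z in (0:ℝ)..δ,
      ((∫ ξ in {ξ : EuclideanSpace ℝ (Fin 3) | ‖ξ‖ ≤ δ ∧ z ≤ ξ 2}, ‖ξ‖ ^ 2) /
        (∫ ξ in {ξ : EuclideanSpace ℝ (Fin 3) | ‖ξ‖ ≤ δ}, ‖ξ‖ ^ 2)) ^ 2)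
      = 125 * δ / 1848 := by
  have hcong : Set.EqOn
      (fun z => ((∫ ξ in {ξ : EuclideanSpace ℝ (Fin 3) | ‖ξ‖ ≤ δ ∧ z ≤ ξ 2}, ‖ξ‖ ^ 2) /
        (∫ ξ in {ξ : EuclideanSpace ℝ (Fin 3) | ‖ξ‖ ≤ δ}, ‖ξ‖ ^ 2)) ^ 2)
      (fun z => (16*δ^10 - 40*δ^9*z + 25*δ^8*z^2 + 8*δ^5*z^5 - 10*δ^4*z^6 + z^10)/(64*δ^10))
      (Set.uIcc (0:ℝ) δ) := by
    intro z hz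
    rw [Set.uIcc_of_le hδ.le, Set.mem_Icc] at hz
    simp only
    rw [ballInt δ hδ, capInt δ z hδ hz.1 hz.2]
    have hπ : π ≠ 0 := pi_ne_zero
    have hδ' : δ ≠ 0 := hδ.ne'
    field_simp
    ring
  rw [intervalIntegral.integral_congr hcong, intervalIntegral.integral_div, polyInt]
  have hδ' : δ ≠ 0 := hδ.ne'
  field_simp
  ring
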